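/- For all nonnegative integers n and m, the following identity holds in ℚ(q): Σ_{k=0}^{⌊n/3⌋} (−1)^k · q^{3·C(k,2)} · [m+n−3k choose m]_q · [m+1 choose k]_{q^3} = Σ_{k=0}^{n} cos((2k−n)π/3) · q^{C(n−k,2)+C(k,2)} · [m+1 choose n−k]_q · [m+1 choose k]_q. -/

import Mathlib

/-- The Gaussian (q-)binomial coefficient `[a choose b]` with parameter `x`,
`∏_{j=1}^{b} (1 - x^{a-b+j})/(1 - x^j)`, an element of `ℚ(q)` when `x = q`;
it is zero when `b > a`. -/
noncomputable def qbinom (x : RatFunc ℚ) (a b : ℕ) : RatFunc ℚ :=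
  if b ≤ a then ∏ j ∈ Finset.range b, (1 - x ^ (a - b + j + 1)) / (1 - x ^ (j + 1)) else 0

/-- The indeterminate `q` of the field of rational functions `ℚ(q)`. -/
noncomputable def q : RatFunc ℚ := RatFunc.X

abbrev K := RatFunc ℚ

lemma tele {M : Type*} [CommMonoid M] (f : ℕ → M) (t : ℕ) :
    (∏ j ∈ Finset.range t, f (j+1)) * f 0 = (∏ j ∈ Finset.range t, f j) * f t := by
  rw [← Finset.prod_range_succ', Finset.prod_range_succ]

section qb
variable (x : K) (hx : ∀ j : ℕ, 1 ≤ j → x ^ j ≠ 1)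

lemma qbinom_zero (a : ℕ) : qbinom x a 0 = 1 := by simp [qbinom]

lemma qbinom_of_lt {a b : ℕ} (h : a < b) : qbinom x a b = 0 := by
  simp [qbinom, Nat.not_le.2 h]

include hx

lemma sub_ne (j : ℕ) (hj : 1 ≤ j) : (1 : K) - x ^ j ≠ 0 := by
  intro h
  exact hx j hj (sub_eq_zero.1 h).symm

lemma qbinom_self (a : ℕ) : qbinom x a a = 1 := by
  rw [qbinom, if_pos le_rfl]
  apply Finset.prod_eq_one
  intro j hj
  rw [Nat.sub_self, Nat.zero_add]
  exact div_self (sub_ne x hx (j+1) (by omega))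

lemma qbinom_succ_succ {a b : ℕ} (h : b ≤ a) :
    qbinom x (a+1) (b+1) = qbinom x a b * ((1 - x ^ (a+1)) / (1 - x ^ (b+1))) := by
  rw [qbinom, if_pos (by omega), qbinom, if_pos h, Finset.prod_range_succ]
  congr 1
  · exact Finset.prod_congr rfl (fun j _ => by congr 3; omega)
  · congr 3 <;> omega

-- L2 : (b+1 ≤ a+1 case general) qbinom (a+1) (b+1) * (1 - x^(a-b)) = qbinom a (b+1) * (1 - x^(a+1))
lemma qbinom_L2 {a b : ℕ} (h : b + 1 ≤ a) :
    qbinom x (a+1) (b+1) * (1 - x ^ (a - b)) = qbinom x a (b+1) * (1 - x ^ (a+1)) := by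
  rw [qbinom, if_pos (by omega), qbinom, if_pos (by omega)]
  rw [Finset.prod_div_distrib, Finset.prod_div_distrib]
  have e1 : ∀ j, a + 1 - (b+1) + j + 1 = (a - b) + (j + 1) := by omega
  have e2 : ∀ j, a - (b+1) + j + 1 = (a - b) + j := by omega
  rw [div_mul_eq_mul_div, div_mul_eq_mul_div]
  congr 1
  simp only [e1, e2]
  have key := tele (fun j => 1 - x ^ (a - b + j)) (b+1)
  simp only [Nat.add_zero] at key
  rw [show a - b + (b+1) = a + 1 by omega] at key
  exact key

lemma qbinom_pascal1 (a b : ℕ) :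
    qbinom x (a+1) (b+1) = qbinom x a (b+1) + x ^ (a - b) * qbinom x a b := by
  rcases lt_or_ge a b with h | h
  · rw [qbinom_of_lt x (by omega), qbinom_of_lt x (by omega), qbinom_of_lt x (by omega)]; ring
  rcases eq_or_lt_of_le h with rfl | h'
  · rw [qbinom_self x hx, qbinom_self x hx, qbinom_of_lt x (by omega), Nat.sub_self]; ring
  · -- b + 1 ≤ a
    have hb : b + 1 ≤ a := by omega
    have hA : (1 : K) - x ^ (a+1) ≠ 0 := sub_ne x hx _ (by omega)
    apply mul_right_cancel₀ hA
    have l1 := qbinom_succ_succ x hx h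
    have l2 := qbinom_L2 x hx hb
    have hB : (1 : K) - x ^ (b+1) ≠ 0 := sub_ne x hx _ (by omega)
    have l1' : qbinom x (a+1) (b+1) * (1 - x ^ (b+1)) = qbinom x a b * (1 - x ^ (a+1)) := by
      rw [l1]; field_simp
    calc qbinom x (a+1) (b+1) * (1 - x ^ (a+1))
        = qbinom x (a+1) (b+1) * (1 - x ^ (a-b)) + x ^ (a-b) * (qbinom x (a+1) (b+1) * (1 - x ^ (b+1))) := by
          have hxx : x ^ (a - b) * x ^ (b+1) = x ^ (a+1) := by
            rw [← pow_add]; congr 1; omega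
          linear_combination qbinom x (a+1) (b+1) * hxx
      _ = (qbinom x a (b+1) + x ^ (a - b) * qbinom x a b) * (1 - x ^ (a+1)) := by
          rw [l2, l1']; ring

lemma qbinom_pascal2 (a b : ℕ) :
    qbinom x (a+1) (b+1) = qbinom x a b + x ^ (b+1) * qbinom x a (b+1) := by
  rcases lt_or_ge a b with h | h
  · rw [qbinom_of_lt x (by omega), qbinom_of_lt x (by omega), qbinom_of_lt x (by omega)]; ring
  rcases eq_or_lt_of_le h with rfl | h'
  · rw [qbinom_self x hx, qbinom_self x hx, qbinom_of_lt x (by omega)]; ring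
  · have hb : b + 1 ≤ a := by omega
    have hA : (1 : K) - x ^ (a+1) ≠ 0 := sub_ne x hx _ (by omega)
    apply mul_right_cancel₀ hA
    have l2 := qbinom_L2 x hx hb
    have hB : (1 : K) - x ^ (b+1) ≠ 0 := sub_ne x hx _ (by omega)
    have l1' : qbinom x (a+1) (b+1) * (1 - x ^ (b+1)) = qbinom x a b * (1 - x ^ (a+1)) := by
      rw [qbinom_succ_succ x hx h]; field_simp
    calc qbinom x (a+1) (b+1) * (1 - x ^ (a+1))
        = qbinom x (a+1) (b+1) * (1 - x ^ (b+1)) + x ^ (b+1) * (qbinom x (a+1) (b+1) * (1 - x ^ (a-b))) := by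
          have hxx : x ^ (b+1) * x ^ (a - b) = x ^ (a+1) := by
            rw [← pow_add]; congr 1; omega
          linear_combination qbinom x (a+1) (b+1) * hxx
      _ = (qbinom x a b + x ^ (b+1) * qbinom x a (b+1)) * (1 - x ^ (a+1)) := by
          rw [l2, l1']; ring

end qb

lemma q_pow_ne_one : ∀ j : ℕ, 1 ≤ j → (q : K) ^ j ≠ 1 := by
  intro j hj h
  have : (algebraMap (Polynomial ℚ) K) (Polynomial.X ^ j) = (algebraMap (Polynomial ℚ) K) 1 := by
    simpa [q, RatFunc.algebraMap_X] using h
  have h2 := RatFunc.algebraMap_injective ℚ this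
  have := congrArg Polynomial.natDegree h2
  simp [Polynomial.natDegree_X_pow] at this
  omega

lemma q3_pow_ne_one : ∀ j : ℕ, 1 ≤ j → ((q : K) ^ 3) ^ j ≠ 1 := by
  intro j hj
  rw [← pow_mul]
  exact q_pow_ne_one (3 * j) (by omega)

lemma c_mod (c : ℤ → ℚ) (hc : ∀ z : ℤ, (c z : ℝ) = Real.cos (z * Real.pi / 3)) (z : ℤ) :
    c z = if z % 6 = 0 then 1 else if z % 6 = 1 then 1/2 else if z % 6 = 2 then -(1/2)
      else if z % 6 = 3 then -1 else if z % 6 = 4 then -(1/2) else 1/2 := by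
  have h := hc z
  have hz : (z : ℝ) = (z % 6 : ℤ) + (z / 6 : ℤ) * 6 := by
    push_cast [Int.emod_def]; ring
  have h2 : Real.cos (z * Real.pi / 3) = Real.cos ((z % 6 : ℤ) * Real.pi / 3) := by
    rw [show (z : ℝ) * Real.pi / 3 = ((z % 6 : ℤ) : ℝ) * Real.pi / 3 + (z / 6 : ℤ) * (2 * Real.pi) by
      rw [hz]; push_cast; ring]
    exact Real.cos_add_int_mul_two_pi _ _
  have hlo : 0 ≤ z % 6 := Int.emod_nonneg z (by norm_num)
  have hhi : z % 6 < 6 := Int.emod_lt_of_pos z (by norm_num)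
  set r := z % 6 with hr
  have key : Real.cos ((r : ℝ) * Real.pi / 3)
      = ((if r = 0 then 1 else if r = 1 then 1/2 else if r = 2 then -(1/2)
        else if r = 3 then -1 else if r = 4 then -(1/2) else 1/2 : ℚ) : ℝ) := by
    interval_cases r
    · norm_num
    · norm_num [Real.cos_pi_div_three]
    · rw [show ((2:ℤ):ℝ) * Real.pi / 3 = Real.pi - Real.pi/3 by push_cast; ring,
        Real.cos_pi_sub, Real.cos_pi_div_three]; norm_num
    · rw [show ((3:ℤ):ℝ) * Real.pi / 3 = Real.pi by push_cast; ring, Real.cos_pi]; norm_num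
    · rw [show ((4:ℤ):ℝ) * Real.pi / 3 = Real.pi/3 + Real.pi by push_cast; ring,
        Real.cos_add_pi, Real.cos_pi_div_three]; norm_num
    · rw [show ((5:ℤ):ℝ) * Real.pi / 3 = 2*Real.pi - Real.pi/3 by push_cast; ring,
        Real.cos_two_pi_sub, Real.cos_pi_div_three]; norm_num
  rw [h2, key] at h
  exact_mod_cast h

lemma c_eval (c : ℤ → ℚ) (hc : ∀ z : ℤ, (c z : ℝ) = Real.cos (z * Real.pi / 3)) (n k : ℕ) :
    c (2 * (k : ℤ) - n) = (-1) ^ n * (if 3 ∣ (n + k) then 1 else -(1/2)) := by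
  rw [c_mod c hc]
  have h2 : (n : ℤ) % 2 = 0 ∨ (n : ℤ) % 2 = 1 := by omega
  have h3 : ((n : ℤ) + k) % 3 = 0 ∨ ((n : ℤ) + k) % 3 = 1 ∨ ((n : ℤ) + k) % 3 = 2 := by omega
  have hd : (3 ∣ (n + k)) ↔ ((n : ℤ) + k) % 3 = 0 := by
    rw [Nat.dvd_iff_mod_eq_zero]; omega
  have hpow : ((-1 : ℚ)) ^ n = if (n : ℤ) % 2 = 0 then 1 else -1 := by
    rcases h2 with h | h
    · rw [if_pos h]; exact Even.neg_one_pow (Nat.even_iff.2 (by omega))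
    · rw [if_neg (by omega)]; exact Odd.neg_one_pow (Nat.odd_iff.2 (by omega))
  rcases h2 with h | h <;> rcases h3 with h' | h' | h' <;>
    [ (have : (2*(k:ℤ) - n) % 6 = 0 := by omega);
      (have : (2*(k:ℤ) - n) % 6 = 2 := by omega);
      (have : (2*(k:ℤ) - n) % 6 = 4 := by omega);
      (have : (2*(k:ℤ) - n) % 6 = 3 := by omega);
      (have : (2*(k:ℤ) - n) % 6 = 5 := by omega);
      (have : (2*(k:ℤ) - n) % 6 = 1 := by omega)] <;>
    simp [this, hpow, h, hd, h'] <;> norm_num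
section prodform
variable {R : Type*} [CommRing R] (φ : K →+* R)

lemma choose_succ_two (k : ℕ) : (k+1).choose 2 = k + k.choose 2 := by
  simp [Nat.choose_succ_succ, Nat.choose_one_right]

lemma prod_formula (x : K) (hx : ∀ j : ℕ, 1 ≤ j → x ^ j ≠ 1) (d : ℕ) (a : R) (m : ℕ) :
    ∏ j ∈ Finset.range (m+1), (1 + Polynomial.C (a * (φ x)^j) * Polynomial.X ^ d)
    = ∑ k ∈ Finset.range (m+2),
        Polynomial.C (a^k * φ (x ^ (k.choose 2) * qbinom x (m+1) k)) * Polynomial.X ^ (d*k) := by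
  induction m with
  | zero =>
    rw [Finset.prod_range_one, Finset.sum_range_succ, Finset.sum_range_one]
    simp [qbinom_zero, qbinom_self x hx]
  | succ m ih =>
    rw [Finset.prod_range_succ, ih, mul_add, mul_one, Finset.sum_mul]
    have hzero : Polynomial.C (a^(m+2) * φ (x ^ ((m+2).choose 2) * qbinom x (m+1) (m+2)))
        * Polynomial.X ^ (d*(m+2)) = 0 := by
      rw [qbinom_of_lt x (by omega)]; simp
    have hfirst : ∑ k ∈ Finset.range (m+2),
        Polynomial.C (a^k * φ (x ^ (k.choose 2) * qbinom x (m+1) k)) * Polynomial.X ^ (d*k)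
        = ∑ k ∈ Finset.range (m+3),
        Polynomial.C (a^k * φ (x ^ (k.choose 2) * qbinom x (m+1) k)) * Polynomial.X ^ (d*k) := by
      rw [Finset.sum_range_succ
        (fun k => Polynomial.C (a^k * φ (x ^ (k.choose 2) * qbinom x (m+1) k)) * Polynomial.X ^ (d*k))
        (m+2), hzero, add_zero]
    rw [hfirst,
      Finset.sum_range_succ'
        (fun k => Polynomial.C (a^k * φ (x ^ (k.choose 2) * qbinom x (m+1) k)) * Polynomial.X ^ (d*k)) (m+2),
      Finset.sum_range_succ'
        (fun k => Polynomial.C (a^k * φ (x ^ (k.choose 2) * qbinom x (m+2) k)) * Polynomial.X ^ (d*k)) (m+2)]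
    simp only [qbinom_zero, pow_zero, Nat.mul_zero, one_mul, mul_one, map_one]
    rw [add_right_comm, add_left_inj, ← Finset.sum_add_distrib]
    apply Finset.sum_congr rfl
    intro k hk
    simp only [Finset.mem_range] at hk
    have hp : qbinom x ((m+1)+1) (k+1) = qbinom x (m+1) (k+1) + x ^ ((m+1) - k) * qbinom x (m+1) k :=
      qbinom_pascal1 x hx (m+1) k
    have he : x ^ ((k+1).choose 2) * (x ^ ((m+1)-k) * qbinom x (m+1) k)
        = x ^ (m+1) * (x ^ (k.choose 2) * qbinom x (m+1) k) := by
      rw [← mul_assoc, ← mul_assoc, ← pow_add, ← pow_add]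
      congr 2
      have := choose_succ_two k
      omega
    have hK : x ^ ((k+1).choose 2) * qbinom x (m+2) (k+1)
        = x ^ ((k+1).choose 2) * qbinom x (m+1) (k+1)
          + x ^ (m+1) * (x ^ (k.choose 2) * qbinom x (m+1) k) := by
      rw [show m + 2 = (m+1)+1 from rfl, hp, mul_add, he]
    rw [hK]
    simp only [map_add, map_mul, map_pow]
    ring
end prodform
section H
variable {R : Type*} [CommRing R] (φ : K →+* R)

noncomputable def Hs (m : ℕ) : PowerSeries R := PowerSeries.mk (fun n => φ (qbinom q (m+n) m))

lemma Hstep (m : ℕ) :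
    (1 - PowerSeries.C (φ q ^ (m+1)) * PowerSeries.X) * Hs φ (m+1) = Hs φ m := by
  ext n
  rw [sub_mul, one_mul, map_sub]
  cases n with
  | zero =>
    simp [Hs, qbinom_self q q_pow_ne_one, mul_assoc]
  | succ n =>
    rw [mul_assoc, PowerSeries.coeff_C_mul, PowerSeries.coeff_succ_X_mul]
    simp only [Hs, PowerSeries.coeff_mk]
    have hp : qbinom q ((m+n+1)+1) (m+1) = qbinom q (m+n+1) m + q ^ (m+1) * qbinom q (m+n+1) (m+1) :=
      qbinom_pascal2 q q_pow_ne_one (m+n+1) m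
    rw [show m + 1 + (n+1) = (m+n+1)+1 by omega, hp]
    rw [show m + 1 + n = m+n+1 by omega, show m + (n+1) = m+n+1 by omega]
    simp [map_add, map_mul, map_pow]

lemma EH (m : ℕ) :
    ((∏ j ∈ Finset.range (m+1),
      (1 + Polynomial.C ((-1) * (φ q)^j) * Polynomial.X ^ 1) : Polynomial R) : PowerSeries R)
      * Hs φ m = 1 := by
  induction m with
  | zero =>
    have h1 : ((∏ j ∈ Finset.range 1,
        (1 + Polynomial.C ((-1) * (φ q)^j) * Polynomial.X ^ 1) : Polynomial R) : PowerSeries R)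
        = 1 - PowerSeries.X := by
      rw [Finset.prod_range_one]
      push_cast [Polynomial.coe_add, Polynomial.coe_one, Polynomial.coe_mul, Polynomial.coe_C,
        Polynomial.coe_pow, Polynomial.coe_X]
      simp
      ring
    rw [h1]
    ext n
    rw [sub_mul, one_mul, map_sub]
    cases n with
    | zero => simp [Hs, qbinom_zero]
    | succ n =>
      rw [PowerSeries.coeff_succ_X_mul]
      simp [Hs, qbinom_zero]
  | succ m ih =>
    rw [Finset.prod_range_succ, Polynomial.coe_mul, mul_assoc]
    have h2 : ((1 + Polynomial.C ((-1) * (φ q)^(m+1)) * Polynomial.X ^ 1 : Polynomial R) : PowerSeries R)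
        = 1 - PowerSeries.C (φ q ^ (m+1)) * PowerSeries.X := by
      push_cast [Polynomial.coe_add, Polynomial.coe_one, Polynomial.coe_mul, Polynomial.coe_C,
        Polynomial.coe_pow, Polynomial.coe_X]
      ring_nf
      simp [map_neg, map_pow]
      ring
    rw [h2, Hstep φ m, ih]
end H
section helpers
variable {R : Type*} [CommRing R]

lemma coeff_sum_CXd (d M : ℕ) (hd : 1 ≤ d) (cf : ℕ → R) (i : ℕ) (hzero : ∀ k, M ≤ k → cf k = 0) :
    (∑ k ∈ Finset.range M, Polynomial.C (cf k) * Polynomial.X ^ (d*k)).coeff i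
    = if d ∣ i then cf (i / d) else 0 := by
  rw [Polynomial.finset_sum_coeff]
  simp only [Polynomial.coeff_C_mul, Polynomial.coeff_X_pow]
  by_cases hcond : d ∣ i
  · obtain ⟨t, rfl⟩ := hcond
    rw [if_pos ⟨t, rfl⟩, Nat.mul_div_cancel_left t (by omega)]
    by_cases ht : t < M
    · rw [Finset.sum_eq_single t]
      · rw [if_pos rfl, mul_one]
      · intro k _ hkt
        rw [if_neg (fun h => hkt (Nat.eq_of_mul_eq_mul_left (by omega) h).symm), mul_zero]
      · intro h; exact absurd (Finset.mem_range.2 ht) h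
    · rw [hzero t (by omega), Finset.sum_eq_zero]
      intro k hk
      rw [Finset.mem_range] at hk
      rw [if_neg (fun h => by have := Nat.eq_of_mul_eq_mul_left (show 0 < d by omega) h; omega),
        mul_zero]
  · rw [if_neg hcond, Finset.sum_eq_zero]
    intro k hk
    rw [if_neg (fun h => hcond ⟨k, h⟩), mul_zero]

lemma sum_mult3 {M : Type*} [AddCommMonoid M] (n : ℕ) (F : ℕ → M) :
    ∑ i ∈ Finset.range (n+1), (if 3 ∣ i then F i else 0)
      = ∑ k ∈ Finset.range (n/3+1), F (3*k) := by
  rw [← Finset.sum_filter]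
  have himg : (Finset.range (n+1)).filter (fun i => 3 ∣ i)
      = (Finset.range (n/3+1)).image (fun k => 3*k) := by
    ext i
    simp only [Finset.mem_filter, Finset.mem_range, Finset.mem_image]
    constructor
    · rintro ⟨hi, t, rfl⟩
      exact ⟨t, by omega, rfl⟩
    · rintro ⟨t, ht, rfl⟩
      exact ⟨by omega, t, rfl⟩
  rw [himg, Finset.sum_image (by intro a _ b _ h; simp only at h; omega)]
end helpers

section adjoin
noncomputable def fpoly : Polynomial K := Polynomial.X^2 + Polynomial.X + 1

lemma fpoly_deg : fpoly.degree ≠ 0 := by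
  have : fpoly.degree = 2 := by unfold fpoly; compute_degree!
  rw [this]; norm_num

noncomputable abbrev Rg := AdjoinRoot fpoly

instance : Nontrivial Rg := AdjoinRoot.nontrivial fpoly fpoly_deg

noncomputable def ww : Rg := AdjoinRoot.root fpoly

lemma omega_rel : ww^2 + ww + 1 = 0 := by
  have h : AdjoinRoot.mk fpoly (Polynomial.X^2 + Polynomial.X + 1) = 0 := AdjoinRoot.mk_self
  rw [map_add, map_add, map_pow, AdjoinRoot.mk_X, map_one] at h
  exact h

lemma omega_cube : ww^3 = 1 := by
  linear_combination (ww - 1) * omega_rel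

lemma omega_pow_mod (a : ℕ) : ww^a = ww^(a % 3) := by
  conv_lhs => rw [← Nat.div_add_mod a 3]
  rw [pow_add, pow_mul, omega_cube, one_pow, one_mul]

lemma omega_sum (a b : ℕ) (hab : (a+b) % 3 = 0) :
    ww^a + ww^b = if a % 3 = 0 then (2:Rg) else -1 := by
  rw [omega_pow_mod a, omega_pow_mod b]
  have h3 : a % 3 = 0 ∧ b % 3 = 0 ∨ a % 3 = 1 ∧ b % 3 = 2 ∨ a % 3 = 2 ∧ b % 3 = 1 := by omega
  rcases h3 with ⟨h1, h2⟩ | ⟨h1, h2⟩ | ⟨h1, h2⟩ <;> rw [h1, h2]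
  · norm_num
  · rw [if_neg (by omega)]; linear_combination omega_rel
  · rw [if_neg (by omega)]; linear_combination omega_rel
end adjoin
section final

lemma scalar_lemma (c : ℤ → ℚ) (hc : ∀ z : ℤ, (c z : ℝ) = Real.cos (z * Real.pi / 3))
    (n k : ℕ) (hk : k ≤ n) :
    (-ww)^k * (-ww^2)^(n-k) + (-ww)^(n-k) * (-ww^2)^k
      = (algebraMap K Rg) ((algebraMap ℚ K) (2 * c (2*(k:ℤ) - n))) := by
  have e1 : (-ww)^k * (-ww^2)^(n-k) = (-1:Rg)^n * ww^(2*n-k) := by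
    rw [neg_pow, neg_pow (ww^2), ← pow_mul, mul_mul_mul_comm, ← pow_add, ← pow_add]
    congr 2 <;> omega
  have e2 : (-ww)^(n-k) * (-ww^2)^k = (-1:Rg)^n * ww^(n+k) := by
    rw [neg_pow, neg_pow (ww^2), ← pow_mul, mul_mul_mul_comm, ← pow_add, ← pow_add]
    congr 2 <;> omega
  rw [e1, e2, ← mul_add, omega_sum (2*n-k) (n+k) (by omega), c_eval c hc n k]
  have hiff : (2*n-k) % 3 = 0 ↔ 3 ∣ (n+k) := by omega
  by_cases h3 : 3 ∣ (n+k)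
  · rw [if_pos (hiff.2 h3), if_pos h3]
    rw [show (2:ℚ) * ((-1)^n * 1) = ((-1)^n * 2 : ℚ) by ring]
    simp [map_mul, map_pow, map_neg, map_one, map_ofNat]
  · rw [if_neg (fun h => h3 (hiff.1 h)), if_neg h3]
    rw [show (2:ℚ) * ((-1)^n * -(1/2)) = ((-1)^n * (-1) : ℚ) by ring]
    simp [map_mul, map_pow, map_neg, map_one]

theorem stmt_15 (n m : ℕ) (c : ℤ → ℚ)
    (hc : ∀ z : ℤ, (c z : ℝ) = Real.cos (z * Real.pi / 3)) :
    ∑ k ∈ Finset.range (n / 3 + 1),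
      (-1 : RatFunc ℚ) ^ k * q ^ (3 * Nat.choose k 2) * qbinom q (m + n - 3 * k) m *
        qbinom (q ^ 3) (m + 1) k
    = ∑ k ∈ Finset.range (n + 1),
        algebraMap ℚ (RatFunc ℚ) (c (2 * (k : ℤ) - n)) *
          q ^ (Nat.choose (n - k) 2 + Nat.choose k 2) *
          qbinom q (m + 1) (n - k) * qbinom q (m + 1) k := by
  classical
  let φ : K →+* Rg := algebraMap K Rg
  apply φ.injective
  -- Polynomials over Rg
  let P : Polynomial Rg := ∏ j ∈ Finset.range (m+1),
    (1 + Polynomial.C ((φ q)^j) * Polynomial.X + Polynomial.C ((φ q)^j)^2 * Polynomial.X^2)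
  let Eneg : Polynomial Rg := ∏ j ∈ Finset.range (m+1),
    (1 + Polynomial.C ((-1) * (φ q)^j) * Polynomial.X ^ 1)
  let G : Polynomial Rg := ∏ j ∈ Finset.range (m+1),
    (1 + Polynomial.C ((-1) * (φ (q^3))^j) * Polynomial.X ^ 3)
  let Ew : Polynomial Rg := ∏ j ∈ Finset.range (m+1),
    (1 + Polynomial.C ((-ww) * (φ q)^j) * Polynomial.X ^ 1)
  let Ew2 : Polynomial Rg := ∏ j ∈ Finset.range (m+1),
    (1 + Polynomial.C ((-ww^2) * (φ q)^j) * Polynomial.X ^ 1)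
  -- polynomial identities
  have hPE : P * Eneg = G := by
    rw [← Finset.prod_mul_distrib]
    apply Finset.prod_congr rfl
    intro j _
    have h1 : (-1 : Rg) * (φ (q^3))^j = -(((φ q)^j)^3) := by
      rw [map_pow, ← pow_mul, mul_comm 3 j, pow_mul, neg_one_mul]
    have h2 : (-1 : Rg) * (φ q)^j = -((φ q)^j) := by ring
    rw [h1, h2]
    simp only [map_neg, map_pow]
    ring
  have hPw : P = Ew * Ew2 := by
    rw [← Finset.prod_mul_distrib]
    apply Finset.prod_congr rfl
    intro j _
    have hrel : (Polynomial.C ww)^2 + Polynomial.C ww + 1 = (0 : Polynomial Rg) := by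
      rw [← map_pow, ← map_add, ← map_one Polynomial.C, ← map_add, omega_rel, map_zero]
    simp only [map_mul, map_neg, map_pow]
    linear_combination ((Polynomial.C (φ q))^j * Polynomial.X
      - (Polynomial.C ww - 1) * (Polynomial.C (φ q))^(2*j) * Polynomial.X^2) * hrel
  -- power series identity
  have hGH : (P : PowerSeries Rg) = (G : PowerSeries Rg) * Hs φ m := by
    have h1 : (P : PowerSeries Rg) * ((Eneg : PowerSeries Rg) * Hs φ m) = (G : PowerSeries Rg) * Hs φ m := by
      rw [← mul_assoc, ← Polynomial.coe_mul, hPE]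
    rw [← h1, EH φ m, mul_one]
  -- coefficients
  have hcG : ∀ i, G.coeff i = if 3 ∣ i then
      ((-1:Rg)^(i/3) * φ ((q^3) ^ ((i/3).choose 2) * qbinom (q^3) (m+1) (i/3))) else 0 := by
    intro i
    show (∏ j ∈ Finset.range (m+1),
      (1 + Polynomial.C ((-1) * (φ (q^3))^j) * Polynomial.X ^ 3)).coeff i = _
    rw [prod_formula φ (q^3) q3_pow_ne_one 3 (-1) m]
    exact coeff_sum_CXd 3 (m+2) (by norm_num)
      (fun k => (-1:Rg)^k * φ ((q^3) ^ (k.choose 2) * qbinom (q^3) (m+1) k)) i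
      (fun k hk => by simp [qbinom_of_lt (q^3) (show m+1 < k by omega)])
  have hcEw : ∀ i, Ew.coeff i = (-ww)^i * φ (q ^ (i.choose 2) * qbinom q (m+1) i) := by
    intro i
    show (∏ j ∈ Finset.range (m+1),
      (1 + Polynomial.C ((-ww) * (φ q)^j) * Polynomial.X ^ 1)).coeff i = _
    rw [prod_formula φ q q_pow_ne_one 1 (-ww) m]
    have := coeff_sum_CXd 1 (m+2) (by norm_num)
      (fun k => (-ww)^k * φ (q ^ (k.choose 2) * qbinom q (m+1) k)) i
      (fun k hk => by simp [qbinom_of_lt q (show m+1 < k by omega)])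
    simpa using this
  have hcEw2 : ∀ i, Ew2.coeff i = (-ww^2)^i * φ (q ^ (i.choose 2) * qbinom q (m+1) i) := by
    intro i
    show (∏ j ∈ Finset.range (m+1),
      (1 + Polynomial.C ((-ww^2) * (φ q)^j) * Polynomial.X ^ 1)).coeff i = _
    rw [prod_formula φ q q_pow_ne_one 1 (-ww^2) m]
    have := coeff_sum_CXd 1 (m+2) (by norm_num)
      (fun k => (-ww^2)^k * φ (q ^ (k.choose 2) * qbinom q (m+1) k)) i
      (fun k hk => by simp [qbinom_of_lt q (show m+1 < k by omega)])
    simpa using this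
  -- LHS computation
  have stepL : φ (∑ k ∈ Finset.range (n / 3 + 1),
      (-1 : RatFunc ℚ) ^ k * q ^ (3 * Nat.choose k 2) * qbinom q (m + n - 3 * k) m *
        qbinom (q ^ 3) (m + 1) k) = P.coeff n := by
    have hc1 : (PowerSeries.coeff n) (P : PowerSeries Rg) = P.coeff n := Polynomial.coeff_coe P n
    rw [← hc1, hGH, PowerSeries.coeff_mul, Finset.Nat.sum_antidiagonal_eq_sum_range_succ_mk]
    simp only [Polynomial.coeff_coe, Hs, PowerSeries.coeff_mk, hcG, ite_mul, zero_mul]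
    rw [sum_mult3 n (fun i => (-1:Rg)^(i/3) * φ ((q^3) ^ ((i/3).choose 2) * qbinom (q^3) (m+1) (i/3))
      * φ (qbinom q (m + (n - i)) m))]
    rw [map_sum]
    apply Finset.sum_congr rfl
    intro k hk
    rw [Finset.mem_range] at hk
    have h3k : 3 * k ≤ n := by omega
    have h1 : 3 * k / 3 = k := by omega
    have h2 : m + (n - 3*k) = m + n - 3*k := by omega
    simp only [h1, h2]
    have hq3 : q ^ (3 * k.choose 2) = (q^3) ^ (k.choose 2) := by rw [← pow_mul]
    rw [hq3]
    simp only [map_mul, map_pow, map_neg, map_one]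
    ring
  -- RHS computation
  have stepR : φ (∑ k ∈ Finset.range (n + 1),
      algebraMap ℚ (RatFunc ℚ) (c (2 * (k : ℤ) - n)) *
        q ^ (Nat.choose (n - k) 2 + Nat.choose k 2) *
        qbinom q (m + 1) (n - k) * qbinom q (m + 1) k) = P.coeff n := by
    rw [hPw, Polynomial.coeff_mul, Finset.Nat.sum_antidiagonal_eq_sum_range_succ_mk]
    simp only [hcEw, hcEw2]
    set t : ℕ → Rg := fun k => ((-ww)^k * φ (q ^ (k.choose 2) * qbinom q (m+1) k)) *
      ((-ww^2)^(n-k) * φ (q ^ ((n-k).choose 2) * qbinom q (m+1) (n-k))) with ht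
    set rterm : ℕ → Rg := fun k => φ ((algebraMap ℚ K) (c (2*(k:ℤ) - n)) *
      q ^ ((n-k).choose 2 + k.choose 2) * qbinom q (m+1) (n-k) * qbinom q (m+1) k) with hrt
    have key : ∀ k ∈ Finset.range (n+1), t k + t (n-k) = rterm k + rterm k := by
      intro k hk
      rw [Finset.mem_range] at hk
      have hk' : k ≤ n := by omega
      have hnk : n - (n - k) = k := by omega
      rw [ht, hrt]
      simp only [hnk]
      have hsc := scalar_lemma c hc n k hk'
      have lhs_eq : ((-ww)^k * φ (q ^ (k.choose 2) * qbinom q (m+1) k)) *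
          ((-ww^2)^(n-k) * φ (q ^ ((n-k).choose 2) * qbinom q (m+1) (n-k))) +
          ((-ww)^(n-k) * φ (q ^ ((n-k).choose 2) * qbinom q (m+1) (n-k))) *
          ((-ww^2)^k * φ (q ^ (k.choose 2) * qbinom q (m+1) k))
          = ((-ww)^k * (-ww^2)^(n-k) + (-ww)^(n-k) * (-ww^2)^k) *
            (φ (q ^ (k.choose 2) * qbinom q (m+1) k) * φ (q ^ ((n-k).choose 2) * qbinom q (m+1) (n-k))) := by
        ring
      rw [lhs_eq, hsc, ← map_mul φ, ← map_mul φ, ← map_add φ]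
      congr 1
      rw [show ((algebraMap ℚ K) (2 * c (2*(k:ℤ) - n))) = 2 * (algebraMap ℚ K) (c (2*(k:ℤ) - n)) by
        rw [map_mul, map_ofNat]]
      rw [pow_add]
      ring
    have hS : ∑ i ∈ Finset.range (n+1), t i = ∑ i ∈ Finset.range (n+1), t (n - i) := by
      rw [← Finset.sum_range_reflect (fun i => t (n - i)) (n+1)]
      apply Finset.sum_congr rfl
      intro i hi
      rw [Finset.mem_range] at hi
      congr 1
      omega
    have hdouble : (∑ i ∈ Finset.range (n+1), t i) + (∑ i ∈ Finset.range (n+1), t i)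
        = (∑ i ∈ Finset.range (n+1), rterm i) + (∑ i ∈ Finset.range (n+1), rterm i) := by
      nth_rewrite 2 [hS]
      rw [← Finset.sum_add_distrib, ← Finset.sum_add_distrib]
      exact Finset.sum_congr rfl key
    have hcancel : ∑ i ∈ Finset.range (n+1), t i = ∑ i ∈ Finset.range (n+1), rterm i := by
      have h2 : φ ((2:K)⁻¹) * ((∑ i ∈ Finset.range (n+1), t i) + (∑ i ∈ Finset.range (n+1), t i))
          = φ ((2:K)⁻¹) * ((∑ i ∈ Finset.range (n+1), rterm i) + (∑ i ∈ Finset.range (n+1), rterm i)) := by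
        rw [hdouble]
      have hh : ∀ u : Rg, φ ((2:K)⁻¹) * (u + u) = u := by
        intro u
        have h21 : φ ((2:K)⁻¹) * φ (2:K) = 1 := by
          rw [← map_mul φ ((2:K)⁻¹) (2:K), show ((2:K)⁻¹ * 2 : K) = 1 from inv_mul_cancel₀ (by
              have h : (algebraMap (Polynomial ℚ) K) 2 ≠ 0 := RatFunc.algebraMap_ne_zero (by norm_num)
              rwa [map_ofNat] at h), map_one]
        have h2' : ((2:Rg)) = φ (2:K) := by rw [map_ofNat]
        calc φ ((2:K)⁻¹) * (u + u) = (φ ((2:K)⁻¹) * φ (2:K)) * u := by rw [← h2']; ring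
          _ = u := by rw [h21, one_mul]
      rw [hh, hh] at h2
      exact h2
    rw [map_sum]
    refine Eq.trans ?_ hcancel.symm
    apply Finset.sum_congr rfl
    intro k hk
    rw [hrt]
  rw [stepL, stepR]
end final
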